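/- arXiv:1703.09879 — 2 statements merged into one kernel-verified Lean document; each statement's English description precedes it below -/
import Mathlib

section
/- Let f, g : ℝ³ → ℂ be smooth functions of (t, x, y) and let μ, ν, λ ∈ ℂ. Then the following bilinear operator identity holds pointwise: (1/2)[(DₓDₜ + Dₓ⁴ − Dᵧ²) f·f]·g·g − (1/2)[(DₓDₜ + Dₓ⁴ − Dᵧ²) g·g]·f·f = Dₓ[(Dₜ + 3λDₓ − √3 i μ Dᵧ + Dₓ³ − √3 i DₓDᵧ + ν) f·g]·(fg) + 3 Dₓ[(Dₓ² + μDₓ + (i/√3) Dᵧ − λ) f·g]·(Dₓ g·f) + √3 i Dᵧ[(Dₓ² + μDₓ + (i/√3) Dᵧ − λ) f·g]·(fg), where for a differential polynomial P(Dₓ,Dᵧ,Dₜ) with constant term c, the constant term acts as (P + c)f·g = P f·g + c f g. -/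
open Complex

/-- Hirota bilinear derivative `Dₜ^l Dₓ^m Dᵧ^n f·g` for functions of `(t,x,y) ∈ ℝ³`. -/
noncomputable def hirota3 (l m n : ℕ) (f g : ℝ × ℝ × ℝ → ℂ) (p : ℝ × ℝ × ℝ) : ℂ :=
  iteratedDeriv l (fun c =>
    iteratedDeriv m (fun a =>
      iteratedDeriv n (fun b =>
        f (p.1 + c, p.2.1 + a, p.2.2 + b) * g (p.1 - c, p.2.1 - a, p.2.2 - b)) 0) 0) 0

noncomputable def pd (v : ℝ × ℝ × ℝ) (φ : ℝ × ℝ × ℝ → ℂ) : ℝ × ℝ × ℝ → ℂ :=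
  fun p => fderiv ℝ φ p v

@[fun_prop]
lemma pd_smooth {φ : ℝ × ℝ × ℝ → ℂ} (hφ : ContDiff ℝ (⊤ : ℕ∞) φ) (v : ℝ × ℝ × ℝ) :
    ContDiff ℝ (⊤ : ℕ∞) (pd v φ) :=
  (hφ.fderiv_right (by exact_mod_cast le_top)).clm_apply contDiff_const


@[fun_prop]
lemma pd_differentiable {φ : ℝ × ℝ × ℝ → ℂ} (hφ : ContDiff ℝ (⊤ : ℕ∞) φ) (v : ℝ × ℝ × ℝ) :
    Differentiable ℝ (pd v φ) :=
  (pd_smooth hφ v).differentiable (by simp)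

@[fun_prop]
lemma pd_differentiableAt {φ : ℝ × ℝ × ℝ → ℂ} (hφ : ContDiff ℝ (⊤ : ℕ∞) φ)
    (v p : ℝ × ℝ × ℝ) : DifferentiableAt ℝ (pd v φ) p :=
  pd_differentiable hφ v p

noncomputable def lineH (f g : ℝ × ℝ × ℝ → ℂ) (u w v : ℝ × ℝ × ℝ) : ℝ → ℂ :=
  fun s => f (u + s • v) * g (w - s • v)

lemma hasDerivAt_lineH {f g : ℝ × ℝ × ℝ → ℂ} (hf : ContDiff ℝ (⊤ : ℕ∞) f)
    (hg : ContDiff ℝ (⊤ : ℕ∞) g) (u w v : ℝ × ℝ × ℝ) (s : ℝ) :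
    HasDerivAt (lineH f g u w v)
      (lineH (pd v f) g u w v s - lineH f (pd v g) u w v s) s := by
  have h1 : HasDerivAt (fun s : ℝ => u + s • v) v s := by
    simpa using ((hasDerivAt_id s).smul_const v).const_add u
  have h2 : HasDerivAt (fun s : ℝ => w - s • v) (-v) s := by
    exact (((hasDerivAt_id s).smul_const v).const_sub w).congr_deriv (by simp)
  have hF : HasDerivAt (fun s : ℝ => f (u + s • v)) (pd v f (u + s • v)) s :=
    ((hf.differentiable (by simp) _).hasFDerivAt).comp_hasDerivAt s h1
  have hG : HasDerivAt (fun s : ℝ => g (w - s • v)) (-pd v g (w - s • v)) s := by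
    have := ((hg.differentiable (by simp) _).hasFDerivAt).comp_hasDerivAt s h2
    rw [show -pd v g (w - s • v) = fderiv ℝ g (w - s • v) (-v) by simp [pd]]
    exact this
  have := hF.mul hG
  show HasDerivAt (fun s => f (u + s • v) * g (w - s • v)) _ s
  exact this.congr_deriv (by simp only [lineH]; ring)

lemma itd_sub {φ ψ : ℝ → ℂ} (k : ℕ) (hφ : ContDiff ℝ (⊤ : ℕ∞) φ)
    (hψ : ContDiff ℝ (⊤ : ℕ∞) ψ) (s : ℝ) :
    iteratedDeriv k (fun t => φ t - ψ t) s = iteratedDeriv k φ s - iteratedDeriv k ψ s := by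
  induction k generalizing φ ψ with
  | zero => simp
  | succ k ih =>
    rw [iteratedDeriv_succ', iteratedDeriv_succ', iteratedDeriv_succ']
    have hd : deriv (fun t => φ t - ψ t) = fun t => deriv φ t - deriv ψ t := by
      funext t
      exact deriv_fun_sub ((hφ.differentiable (by simp)) t)
        ((hψ.differentiable (by simp)) t)
    rw [hd, ih (contDiff_infty_iff_deriv.mp hφ).2 (contDiff_infty_iff_deriv.mp hψ).2]

@[fun_prop]
lemma lineH_smooth {f g : ℝ × ℝ × ℝ → ℂ} (hf : ContDiff ℝ (⊤ : ℕ∞) f)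
    (hg : ContDiff ℝ (⊤ : ℕ∞) g) (u w v : ℝ × ℝ × ℝ) :
    ContDiff ℝ (⊤ : ℕ∞) (lineH f g u w v) := by
  have h1 : ContDiff ℝ (⊤ : ℕ∞) (fun s : ℝ => u + s • v) :=
    contDiff_const.add (contDiff_id.smul contDiff_const)
  have h2 : ContDiff ℝ (⊤ : ℕ∞) (fun s : ℝ => w - s • v) :=
    contDiff_const.sub (contDiff_id.smul contDiff_const)
  exact (hf.comp h1).mul (hg.comp h2)

lemma lineH_zero (f g : ℝ × ℝ × ℝ → ℂ) (u w v : ℝ × ℝ × ℝ) :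
    lineH f g u w v 0 = f u * g w := by simp [lineH]

lemma itd_lineH_succ {f g : ℝ × ℝ × ℝ → ℂ} (hf : ContDiff ℝ (⊤ : ℕ∞) f)
    (hg : ContDiff ℝ (⊤ : ℕ∞) g) {u w v : ℝ × ℝ × ℝ} {K k : ℕ} (hk : K = k + 1) (s : ℝ) :
    iteratedDeriv K (lineH f g u w v) s
      = iteratedDeriv k (lineH (pd v f) g u w v) s
        - iteratedDeriv k (lineH f (pd v g) u w v) s := by
  subst hk
  rw [iteratedDeriv_succ']
  have hd : deriv (lineH f g u w v)
      = fun s => lineH (pd v f) g u w v s - lineH f (pd v g) u w v s := by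
    funext s; exact (hasDerivAt_lineH hf hg u w v s).deriv
  rw [hd, itd_sub k (lineH_smooth (pd_smooth hf v) hg u w v)
    (lineH_smooth hf (pd_smooth hg v) u w v)]

lemma e1 {f g : ℝ × ℝ × ℝ → ℂ} (hf : ContDiff ℝ (⊤ : ℕ∞) f)
    (hg : ContDiff ℝ (⊤ : ℕ∞) g) (u w v : ℝ × ℝ × ℝ) :
    iteratedDeriv 1 (lineH f g u w v) 0 = pd v f u * g w - f u * pd v g w := by
  rw [itd_lineH_succ hf hg rfl]
  simp [lineH_zero]

lemma e2 {f g : ℝ × ℝ × ℝ → ℂ} (hf : ContDiff ℝ (⊤ : ℕ∞) f)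
    (hg : ContDiff ℝ (⊤ : ℕ∞) g) (u w v : ℝ × ℝ × ℝ) :
    iteratedDeriv 2 (lineH f g u w v) 0
      = pd v (pd v f) u * g w - 2 * (pd v f u * pd v g w) + f u * pd v (pd v g) w := by
  rw [itd_lineH_succ hf hg (k := 1) rfl, e1 (pd_smooth hf v) hg, e1 hf (pd_smooth hg v)]
  ring

lemma e3 {f g : ℝ × ℝ × ℝ → ℂ} (hf : ContDiff ℝ (⊤ : ℕ∞) f)
    (hg : ContDiff ℝ (⊤ : ℕ∞) g) (u w v : ℝ × ℝ × ℝ) :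
    iteratedDeriv 3 (lineH f g u w v) 0
      = pd v (pd v (pd v f)) u * g w - 3 * (pd v (pd v f) u * pd v g w)
        + 3 * (pd v f u * pd v (pd v g) w) - f u * pd v (pd v (pd v g)) w := by
  rw [itd_lineH_succ hf hg (k := 2) rfl, e2 (pd_smooth hf v) hg, e2 hf (pd_smooth hg v)]
  ring

lemma e4 {f g : ℝ × ℝ × ℝ → ℂ} (hf : ContDiff ℝ (⊤ : ℕ∞) f)
    (hg : ContDiff ℝ (⊤ : ℕ∞) g) (u w v : ℝ × ℝ × ℝ) :
    iteratedDeriv 4 (lineH f g u w v) 0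
      = pd v (pd v (pd v (pd v f))) u * g w - 4 * (pd v (pd v (pd v f)) u * pd v g w)
        + 6 * (pd v (pd v f) u * pd v (pd v g) w)
        - 4 * (pd v f u * pd v (pd v (pd v g)) w) + f u * pd v (pd v (pd v (pd v g))) w := by
  rw [itd_lineH_succ hf hg (k := 3) rfl, e3 (pd_smooth hf v) hg, e3 hf (pd_smooth hg v)]
  ring

def vt : ℝ × ℝ × ℝ := (1, 0, 0)
def vx : ℝ × ℝ × ℝ := (0, 1, 0)
def vy : ℝ × ℝ × ℝ := (0, 0, 1)

lemma hirota3_eq (l m n : ℕ) (f g : ℝ × ℝ × ℝ → ℂ) (p : ℝ × ℝ × ℝ) :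
    hirota3 l m n f g p
      = iteratedDeriv l (fun c =>
          iteratedDeriv m (fun a =>
            iteratedDeriv n
              (lineH f g (p.1 + c, p.2.1 + a, p.2.2) (p.1 - c, p.2.1 - a, p.2.2) vy) 0) 0) 0 := by
  obtain ⟨t, x, y⟩ := p
  unfold hirota3 lineH vy
  simp only [Prod.smul_mk, smul_eq_mul, mul_zero, mul_one,
    Prod.mk_add_mk, Prod.mk_sub_mk, add_zero, sub_zero]

section
variable {f g : ℝ × ℝ × ℝ → ℂ}

lemma h010 (hf : ContDiff ℝ (⊤ : ℕ∞) f) (hg : ContDiff ℝ (⊤ : ℕ∞) g) (p : ℝ × ℝ × ℝ) :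
    hirota3 0 1 0 f g p = pd vx f p * g p - f p * pd vx g p := by
  obtain ⟨t, x, y⟩ := p
  rw [hirota3_eq]
  simp only [iteratedDeriv_zero, lineH_zero, add_zero, sub_zero]
  have hm : (fun a => f (t, x + a, y) * g (t, x - a, y))
      = lineH f g (t, x, y) (t, x, y) vx := by
    funext a
    simp [lineH, vx, Prod.smul_mk, smul_eq_mul, Prod.mk_add_mk, Prod.mk_sub_mk]
  rw [hm, e1 hf hg]

lemma h020 (hf : ContDiff ℝ (⊤ : ℕ∞) f) (hg : ContDiff ℝ (⊤ : ℕ∞) g) (p : ℝ × ℝ × ℝ) :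
    hirota3 0 2 0 f g p
      = pd vx (pd vx f) p * g p - 2 * (pd vx f p * pd vx g p) + f p * pd vx (pd vx g) p := by
  obtain ⟨t, x, y⟩ := p
  rw [hirota3_eq]
  simp only [iteratedDeriv_zero, lineH_zero, add_zero, sub_zero]
  have hm : (fun a => f (t, x + a, y) * g (t, x - a, y))
      = lineH f g (t, x, y) (t, x, y) vx := by
    funext a
    simp [lineH, vx, Prod.smul_mk, smul_eq_mul, Prod.mk_add_mk, Prod.mk_sub_mk]
  rw [hm, e2 hf hg]

lemma h030 (hf : ContDiff ℝ (⊤ : ℕ∞) f) (hg : ContDiff ℝ (⊤ : ℕ∞) g) (p : ℝ × ℝ × ℝ) :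
    hirota3 0 3 0 f g p
      = pd vx (pd vx (pd vx f)) p * g p - 3 * (pd vx (pd vx f) p * pd vx g p)
        + 3 * (pd vx f p * pd vx (pd vx g) p) - f p * pd vx (pd vx (pd vx g)) p := by
  obtain ⟨t, x, y⟩ := p
  rw [hirota3_eq]
  simp only [iteratedDeriv_zero, lineH_zero, add_zero, sub_zero]
  have hm : (fun a => f (t, x + a, y) * g (t, x - a, y))
      = lineH f g (t, x, y) (t, x, y) vx := by
    funext a
    simp [lineH, vx, Prod.smul_mk, smul_eq_mul, Prod.mk_add_mk, Prod.mk_sub_mk]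
  rw [hm, e3 hf hg]

lemma h040 (hf : ContDiff ℝ (⊤ : ℕ∞) f) (hg : ContDiff ℝ (⊤ : ℕ∞) g) (p : ℝ × ℝ × ℝ) :
    hirota3 0 4 0 f g p
      = pd vx (pd vx (pd vx (pd vx f))) p * g p
        - 4 * (pd vx (pd vx (pd vx f)) p * pd vx g p)
        + 6 * (pd vx (pd vx f) p * pd vx (pd vx g) p)
        - 4 * (pd vx f p * pd vx (pd vx (pd vx g)) p)
        + f p * pd vx (pd vx (pd vx (pd vx g))) p := by
  obtain ⟨t, x, y⟩ := p
  rw [hirota3_eq]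
  simp only [iteratedDeriv_zero, lineH_zero, add_zero, sub_zero]
  have hm : (fun a => f (t, x + a, y) * g (t, x - a, y))
      = lineH f g (t, x, y) (t, x, y) vx := by
    funext a
    simp [lineH, vx, Prod.smul_mk, smul_eq_mul, Prod.mk_add_mk, Prod.mk_sub_mk]
  rw [hm, e4 hf hg]

lemma h001 (hf : ContDiff ℝ (⊤ : ℕ∞) f) (hg : ContDiff ℝ (⊤ : ℕ∞) g) (p : ℝ × ℝ × ℝ) :
    hirota3 0 0 1 f g p = pd vy f p * g p - f p * pd vy g p := by
  obtain ⟨t, x, y⟩ := p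
  rw [hirota3_eq]
  simp only [iteratedDeriv_zero, add_zero, sub_zero]
  rw [e1 hf hg]

lemma h002 (hf : ContDiff ℝ (⊤ : ℕ∞) f) (hg : ContDiff ℝ (⊤ : ℕ∞) g) (p : ℝ × ℝ × ℝ) :
    hirota3 0 0 2 f g p
      = pd vy (pd vy f) p * g p - 2 * (pd vy f p * pd vy g p) + f p * pd vy (pd vy g) p := by
  obtain ⟨t, x, y⟩ := p
  rw [hirota3_eq]
  simp only [iteratedDeriv_zero, add_zero, sub_zero]
  rw [e2 hf hg]

lemma h100 (hf : ContDiff ℝ (⊤ : ℕ∞) f) (hg : ContDiff ℝ (⊤ : ℕ∞) g) (p : ℝ × ℝ × ℝ) :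
    hirota3 1 0 0 f g p = pd vt f p * g p - f p * pd vt g p := by
  obtain ⟨t, x, y⟩ := p
  rw [hirota3_eq]
  simp only [iteratedDeriv_zero, lineH_zero, add_zero, sub_zero]
  have hm : (fun c => f (t + c, x, y) * g (t - c, x, y))
      = lineH f g (t, x, y) (t, x, y) vt := by
    funext c
    simp [lineH, vt, Prod.smul_mk, smul_eq_mul, Prod.mk_add_mk, Prod.mk_sub_mk]
  rw [hm, e1 hf hg]

lemma h011 (hf : ContDiff ℝ (⊤ : ℕ∞) f) (hg : ContDiff ℝ (⊤ : ℕ∞) g) (p : ℝ × ℝ × ℝ) :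
    hirota3 0 1 1 f g p
      = pd vx (pd vy f) p * g p - pd vy f p * pd vx g p
        - pd vx f p * pd vy g p + f p * pd vx (pd vy g) p := by
  obtain ⟨t, x, y⟩ := p
  rw [hirota3_eq]
  simp only [iteratedDeriv_zero, add_zero, sub_zero]
  simp only [e1 hf hg]
  have hout : (fun a => pd vy f (t, x + a, y) * g (t, x - a, y)
        - f (t, x + a, y) * pd vy g (t, x - a, y))
      = fun a => lineH (pd vy f) g (t, x, y) (t, x, y) vx a
        - lineH f (pd vy g) (t, x, y) (t, x, y) vx a := by
    funext a
    simp [lineH, vx, Prod.smul_mk, smul_eq_mul, Prod.mk_add_mk, Prod.mk_sub_mk]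
  rw [hout, itd_sub 1 (lineH_smooth (pd_smooth hf vy) hg _ _ _)
    (lineH_smooth hf (pd_smooth hg vy) _ _ _), e1 (pd_smooth hf vy) hg,
    e1 hf (pd_smooth hg vy)]
  ring

lemma h110 (hf : ContDiff ℝ (⊤ : ℕ∞) f) (hg : ContDiff ℝ (⊤ : ℕ∞) g) (p : ℝ × ℝ × ℝ) :
    hirota3 1 1 0 f g p
      = pd vt (pd vx f) p * g p - pd vx f p * pd vt g p
        - pd vt f p * pd vx g p + f p * pd vt (pd vx g) p := by
  obtain ⟨t, x, y⟩ := p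
  rw [hirota3_eq]
  simp only [iteratedDeriv_zero, lineH_zero, add_zero, sub_zero]
  have hmid : ∀ c, iteratedDeriv 1
        (fun a => f (t + c, x + a, y) * g (t - c, x - a, y)) 0
      = pd vx f (t + c, x, y) * g (t - c, x, y)
        - f (t + c, x, y) * pd vx g (t - c, x, y) := by
    intro c
    have hm : (fun a => f (t + c, x + a, y) * g (t - c, x - a, y))
        = lineH f g (t + c, x, y) (t - c, x, y) vx := by
      funext a
      simp [lineH, vx, Prod.smul_mk, smul_eq_mul, Prod.mk_add_mk, Prod.mk_sub_mk]
    rw [hm, e1 hf hg]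
  simp only [hmid]
  have hout : (fun c => pd vx f (t + c, x, y) * g (t - c, x, y)
        - f (t + c, x, y) * pd vx g (t - c, x, y))
      = fun c => lineH (pd vx f) g (t, x, y) (t, x, y) vt c
        - lineH f (pd vx g) (t, x, y) (t, x, y) vt c := by
    funext c
    simp [lineH, vt, Prod.smul_mk, smul_eq_mul, Prod.mk_add_mk, Prod.mk_sub_mk]
  rw [hout, itd_sub 1 (lineH_smooth (pd_smooth hf vx) hg _ _ _)
    (lineH_smooth hf (pd_smooth hg vx) _ _ _), e1 (pd_smooth hf vx) hg,
    e1 hf (pd_smooth hg vx)]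
  ring

end

section
variable {φ ψ : ℝ × ℝ × ℝ → ℂ} {v w : ℝ × ℝ × ℝ} {p : ℝ × ℝ × ℝ}

lemma pd_add (h1 : DifferentiableAt ℝ φ p) (h2 : DifferentiableAt ℝ ψ p) (v : ℝ × ℝ × ℝ) :
    pd v (fun q => φ q + ψ q) p = pd v φ p + pd v ψ p := by
  simp [pd, fderiv_fun_add h1 h2]

lemma pd_sub (h1 : DifferentiableAt ℝ φ p) (h2 : DifferentiableAt ℝ ψ p) (v : ℝ × ℝ × ℝ) :
    pd v (fun q => φ q - ψ q) p = pd v φ p - pd v ψ p := by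
  simp [pd, fderiv_fun_sub h1 h2]

lemma pd_mul (h1 : DifferentiableAt ℝ φ p) (h2 : DifferentiableAt ℝ ψ p) (v : ℝ × ℝ × ℝ) :
    pd v (fun q => φ q * ψ q) p = pd v φ p * ψ p + φ p * pd v ψ p := by
  simp [pd, fderiv_fun_mul h1 h2]
  ring

lemma pd_const (c : ℂ) (v : ℝ × ℝ × ℝ) : pd v (fun _ => c) p = 0 := by
  simp [pd]

lemma pd_const_mul (h1 : DifferentiableAt ℝ φ p) (c : ℂ) (v : ℝ × ℝ × ℝ) :
    pd v (fun q => c * φ q) p = c * pd v φ p := by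
  simp [pd, fderiv_const_mul h1 c]

lemma pd_comm (hφ : ContDiff ℝ (⊤ : ℕ∞) φ) (v w : ℝ × ℝ × ℝ) (p : ℝ × ℝ × ℝ) :
    pd v (pd w φ) p = pd w (pd v φ) p := by
  have h2' : minSmoothness ℝ 2 ≤ ((⊤ : ℕ∞) : WithTop ℕ∞) := by
    rw [minSmoothness_of_isRCLikeNormedField]; norm_cast
  have hsymm : IsSymmSndFDerivAt ℝ φ p := hφ.contDiffAt.isSymmSndFDerivAt h2'
  have hc : ContDiff ℝ (⊤ : ℕ∞) (fderiv ℝ φ) := hφ.fderiv_right (by exact_mod_cast le_top)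
  have hd : DifferentiableAt ℝ (fderiv ℝ φ) p :=
    (hc.differentiable (by simp)) p
  have key : ∀ a b : ℝ × ℝ × ℝ, pd a (pd b φ) p = fderiv ℝ (fderiv ℝ φ) p a b := by
    intro a b
    have : pd b φ = fun q => (fderiv ℝ φ q) b := rfl
    rw [this]
    show (fderiv ℝ (fun q => (fderiv ℝ φ q) b) p) a = _
    rw [fderiv_clm_apply hd (differentiableAt_const b)]
    simp
  rw [key v w, key w v, hsymm]
end

lemma pd_comm' {φ : ℝ × ℝ × ℝ → ℂ} (hφ : ContDiff ℝ (⊤ : ℕ∞) φ) (v w : ℝ × ℝ × ℝ) :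
    pd v (pd w φ) = pd w (pd v φ) :=
  funext fun p => pd_comm hφ v w p

set_option maxHeartbeats 4000000 in
/-- The fundamental Hirota bilinear operator identity underlying the Bäcklund
transformation for the KP-I equation (with arbitrary parameters `μ, ν, λ ∈ ℂ`). -/
theorem hirota_backlund_identity (f g : ℝ × ℝ × ℝ → ℂ)
    (hf : ContDiff ℝ (⊤ : ℕ∞) f) (hg : ContDiff ℝ (⊤ : ℕ∞) g)
    (μ ν lam : ℂ) (p : ℝ × ℝ × ℝ) :
    (1/2) * (hirota3 1 1 0 f f p + hirota3 0 4 0 f f p - hirota3 0 0 2 f f p)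
        * (g p * g p)
      - (1/2) * (hirota3 1 1 0 g g p + hirota3 0 4 0 g g p - hirota3 0 0 2 g g p)
        * (f p * f p)
    = hirota3 0 1 0
        (fun q => hirota3 1 0 0 f g q + 3 * lam * hirota3 0 1 0 f g q
          - (Real.sqrt 3 : ℂ) * I * μ * hirota3 0 0 1 f g q
          + hirota3 0 3 0 f g q
          - (Real.sqrt 3 : ℂ) * I * hirota3 0 1 1 f g q
          + ν * (f q * g q))
        (fun q => f q * g q) p
      + 3 * hirota3 0 1 0
        (fun q => hirota3 0 2 0 f g q + μ * hirota3 0 1 0 f g q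
          + I / (Real.sqrt 3 : ℂ) * hirota3 0 0 1 f g q - lam * (f q * g q))
        (fun q => hirota3 0 1 0 g f q) p
      + (Real.sqrt 3 : ℂ) * I * hirota3 0 0 1
        (fun q => hirota3 0 2 0 f g q + μ * hirota3 0 1 0 f g q
          + I / (Real.sqrt 3 : ℂ) * hirota3 0 0 1 f g q - lam * (f q * g q))
        (fun q => f q * g q) p := by
  have hs0 : ((Real.sqrt 3 : ℝ) : ℂ) ≠ 0 := by
    norm_cast
    positivity
  have h3 : ((Real.sqrt 3 : ℝ) : ℂ) ^ 2 = 3 := by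
    rw [← Complex.ofReal_pow]
    norm_num [Real.sq_sqrt]
  have hdiv : I / ((Real.sqrt 3 : ℝ) : ℂ) = ((Real.sqrt 3 : ℝ) : ℂ) * I / 3 := by
    field_simp
    linear_combination (-1 : ℂ) * h3
  have hfd : Differentiable ℝ f := hf.differentiable (by simp)
  have hgd : Differentiable ℝ g := hg.differentiable (by simp)
  simp only [hdiv]
  simp (disch := fun_prop) only [h100, h010, h001, h020, h030, h040, h002, h110, h011]
  simp (disch := fun_prop) only [pd_add, pd_sub, pd_mul, pd_const_mul, pd_const]
  simp only [pd_comm' hf vx vt, pd_comm' hg vx vt, pd_comm' hf vy vx, pd_comm' hg vy vx,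
    pd_comm' (pd_smooth hf vx) vy vx, pd_comm' (pd_smooth hg vx) vy vx]
  ring_nf
  simp only [Complex.I_sq, h3]
  ring
end

section
/- Define τ̃₁(t,x,y) = (x − t) + iy + √3 and τ̃₂(t,x,y) = (x − t)² + y² + 3 as smooth functions ℝ³ → ℂ. Then both τ̃₁ and τ̃₂ satisfy the bilinear KP-I equation (DₓDₜ + Dₓ⁴ − Dᵧ²) τ·τ = 0 on ℝ³. -/
open Complex

/-- `τ̃₁(t,x,y) = (x − t) + iy + √3`. -/
noncomputable def tauTilde1 (p : ℝ × ℝ × ℝ) : ℂ :=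
  ((p.2.1 - p.1 : ℝ) : ℂ) + (p.2.2 : ℂ) * I + (Real.sqrt 3 : ℂ)

/-- `τ̃₂(t,x,y) = (x − t)² + y² + 3`. -/
noncomputable def tauTilde2 (p : ℝ × ℝ × ℝ) : ℂ :=
  (((p.2.1 - p.1) ^ 2 + p.2.2 ^ 2 + 3 : ℝ) : ℂ)

/-- A quartic polynomial `ℝ → ℂ` in the (real) variable, with complex coefficients. -/
noncomputable def P4 (c0 c1 c2 c3 c4 : ℂ) : ℝ → ℂ :=
  fun a => c0 + c1 * (a : ℂ) + c2 * (a : ℂ)^2 + c3 * (a : ℂ)^3 + c4 * (a : ℂ)^4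

lemma hasDerivAt_P4 (c0 c1 c2 c3 c4 : ℂ) (a : ℝ) :
    HasDerivAt (P4 c0 c1 c2 c3 c4)
      (c1 + 2*c2*(a:ℂ) + 3*c3*(a:ℂ)^2 + 4*c4*(a:ℂ)^3) a := by
  have h : HasDerivAt (fun x : ℝ => (x:ℂ)) 1 a := by
    exact Complex.ofRealCLM.hasDerivAt
  have h2 : HasDerivAt (fun x : ℝ => (x:ℂ)^2) (2*(a:ℂ)) a := by
    have := h.mul h
    convert this using 1 <;> first | rfl | (funext x; simp only [Pi.mul_apply]; ring) | ring
  have h3 : HasDerivAt (fun x : ℝ => (x:ℂ)^3) (3*(a:ℂ)^2) a := by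
    have := h2.mul h
    convert this using 1 <;> first | rfl | (funext x; simp only [Pi.mul_apply]; ring) | ring
  have h4 : HasDerivAt (fun x : ℝ => (x:ℂ)^4) (4*(a:ℂ)^3) a := by
    have := h3.mul h
    convert this using 1 <;> first | rfl | (funext x; simp only [Pi.mul_apply]; ring) | ring
  have H := ((((hasDerivAt_const a c0).add (h.const_mul c1)).add
      (h2.const_mul c2)).add (h3.const_mul c3)).add (h4.const_mul c4)
  convert H using 1
  · rfl
  · rfl
  ring

lemma deriv_P4 (c0 c1 c2 c3 c4 : ℂ) :
    deriv (P4 c0 c1 c2 c3 c4) = P4 c1 (2*c2) (3*c3) (4*c4) 0 := by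
  funext a
  rw [(hasDerivAt_P4 c0 c1 c2 c3 c4 a).deriv]
  simp [P4]

lemma P4_it1 (c0 c1 c2 c3 c4 : ℂ) : iteratedDeriv 1 (P4 c0 c1 c2 c3 c4) 0 = c1 := by
  rw [iteratedDeriv_one, deriv_P4]; simp [P4]

lemma P4_it2 (c0 c1 c2 c3 c4 : ℂ) : iteratedDeriv 2 (P4 c0 c1 c2 c3 c4) 0 = 2*c2 := by
  rw [show (2:ℕ) = 1+1 from rfl, iteratedDeriv_succ', deriv_P4, P4_it1]

lemma P4_it4 (c0 c1 c2 c3 c4 : ℂ) : iteratedDeriv 4 (P4 c0 c1 c2 c3 c4) 0 = 24*c4 := by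
  rw [show (4:ℕ) = 3+1 from rfl, iteratedDeriv_succ', deriv_P4,
      iteratedDeriv_succ' (n := 2), deriv_P4, P4_it2]
  ring

/-- Both `τ̃₁` and `τ̃₂` satisfy the bilinear KP-I equation
`(DₓDₜ + Dₓ⁴ − Dᵧ²) τ·τ = 0`. -/
theorem tauTilde_solve_bilinear_KPI :
    (∀ p : ℝ × ℝ × ℝ,
      hirota3 1 1 0 tauTilde1 tauTilde1 p + hirota3 0 4 0 tauTilde1 tauTilde1 p
        - hirota3 0 0 2 tauTilde1 tauTilde1 p = 0) ∧
    (∀ p : ℝ × ℝ × ℝ,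
      hirota3 1 1 0 tauTilde2 tauTilde2 p + hirota3 0 4 0 tauTilde2 tauTilde2 p
        - hirota3 0 0 2 tauTilde2 tauTilde2 p = 0) := by
  constructor
  · intro p
    obtain ⟨t, x, y⟩ := p
    have e1 : hirota3 1 1 0 tauTilde1 tauTilde1 (t, x, y) = 2 := by
      have key : (fun c : ℝ => iteratedDeriv 1 (fun a : ℝ =>
          tauTilde1 (t + c, x + a, y + 0) * tauTilde1 (t - c, x - a, y - 0)) 0)
          = P4 0 2 0 0 0 := by
        funext c
        rw [show (fun a : ℝ => tauTilde1 (t + c, x + a, y + 0) * tauTilde1 (t - c, x - a, y - 0))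
            = P4 (((x:ℂ) - t + y*I + Real.sqrt 3)^2 - (c:ℂ)^2) (2*(c:ℂ)) (-1) 0 0 from
          funext fun a => by simp only [tauTilde1, P4]; push_cast; ring, P4_it1]
        simp [P4]
      unfold hirota3
      simp only [iteratedDeriv_zero]
      rw [show (fun c : ℝ => iteratedDeriv 1 (fun a : ℝ =>
          (fun b : ℝ => tauTilde1 ((t,x,y).1 + c, (t,x,y).2.1 + a, (t,x,y).2.2 + b) *
            tauTilde1 ((t,x,y).1 - c, (t,x,y).2.1 - a, (t,x,y).2.2 - b)) 0) 0)
          = P4 0 2 0 0 0 from key, P4_it1]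
    have e2 : hirota3 0 4 0 tauTilde1 tauTilde1 (t, x, y) = 0 := by
      unfold hirota3
      simp only [iteratedDeriv_zero]
      rw [show (fun a : ℝ =>
          (fun b : ℝ => tauTilde1 ((t,x,y).1 + 0, (t,x,y).2.1 + a, (t,x,y).2.2 + b) *
            tauTilde1 ((t,x,y).1 - 0, (t,x,y).2.1 - a, (t,x,y).2.2 - b)) 0)
          = P4 (((x:ℂ) - t + y*I + Real.sqrt 3)^2) 0 (-1) 0 0 from
        funext fun a => by simp only [tauTilde1, P4]; push_cast; ring, P4_it4]
      ring
    have e3 : hirota3 0 0 2 tauTilde1 tauTilde1 (t, x, y) = 2 := by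
      unfold hirota3
      simp only [iteratedDeriv_zero]
      rw [show (fun b : ℝ => tauTilde1 ((t,x,y).1 + 0, (t,x,y).2.1 + 0, (t,x,y).2.2 + b) *
            tauTilde1 ((t,x,y).1 - 0, (t,x,y).2.1 - 0, (t,x,y).2.2 - b))
          = P4 (((x:ℂ) - t + y*I + Real.sqrt 3)^2) 0 1 0 0 from
        funext fun b => by
          simp only [tauTilde1, P4]; push_cast
          linear_combination (-(b:ℂ)^2) * Complex.I_sq, P4_it2]
      ring
    rw [e1, e2, e3]; ring
  · intro p
    obtain ⟨t, x, y⟩ := p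
    have e1 : hirota3 1 1 0 tauTilde2 tauTilde2 (t, x, y)
        = 4*((x:ℂ) - t)^2 - 4*(y:ℂ)^2 - 12 := by
      have key : (fun c : ℝ => iteratedDeriv 1 (fun a : ℝ =>
          tauTilde2 (t + c, x + a, y + 0) * tauTilde2 (t - c, x - a, y - 0)) 0)
          = P4 0 (4*((x:ℂ) - t)^2 - 4*(y:ℂ)^2 - 12) 0 (-4) 0 := by
        funext c
        rw [show (fun a : ℝ => tauTilde2 (t + c, x + a, y + 0) * tauTilde2 (t - c, x - a, y - 0))
            = P4 ((((x:ℂ) - t - c)^2 + (y:ℂ)^2 + 3) * (((x:ℂ) - t + c)^2 + (y:ℂ)^2 + 3))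
                (-2*(((x:ℂ) - t - c)^2 + (y:ℂ)^2 + 3)*((x:ℂ) - t + c)
                  + 2*(((x:ℂ) - t + c)^2 + (y:ℂ)^2 + 3)*((x:ℂ) - t - c))
                ((((x:ℂ) - t - c)^2 + (y:ℂ)^2 + 3) + (((x:ℂ) - t + c)^2 + (y:ℂ)^2 + 3)
                  - 4*((x:ℂ) - t - c)*((x:ℂ) - t + c))
                (-4*(c:ℂ)) 1 from
          funext fun a => by simp only [tauTilde2, P4]; push_cast; ring, P4_it1]
        simp only [P4]; push_cast; ring
      unfold hirota3
      simp only [iteratedDeriv_zero]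
      rw [show (fun c : ℝ => iteratedDeriv 1 (fun a : ℝ =>
          (fun b : ℝ => tauTilde2 ((t,x,y).1 + c, (t,x,y).2.1 + a, (t,x,y).2.2 + b) *
            tauTilde2 ((t,x,y).1 - c, (t,x,y).2.1 - a, (t,x,y).2.2 - b)) 0) 0)
          = P4 0 (4*((x:ℂ) - t)^2 - 4*(y:ℂ)^2 - 12) 0 (-4) 0 from key, P4_it1]
    have e2 : hirota3 0 4 0 tauTilde2 tauTilde2 (t, x, y) = 24 := by
      unfold hirota3
      simp only [iteratedDeriv_zero]
      rw [show (fun a : ℝ =>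
          (fun b : ℝ => tauTilde2 ((t,x,y).1 + 0, (t,x,y).2.1 + a, (t,x,y).2.2 + b) *
            tauTilde2 ((t,x,y).1 - 0, (t,x,y).2.1 - a, (t,x,y).2.2 - b)) 0)
          = P4 ((((x:ℂ) - t)^2 + (y:ℂ)^2 + 3)^2) 0
              (2*(((x:ℂ) - t)^2 + (y:ℂ)^2 + 3) - 4*((x:ℂ) - t)^2) 0 1 from
        funext fun a => by simp only [tauTilde2, P4]; push_cast; ring, P4_it4]
      ring
    have e3 : hirota3 0 0 2 tauTilde2 tauTilde2 (t, x, y)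
        = 4*((x:ℂ) - t)^2 + 12 - 4*(y:ℂ)^2 := by
      unfold hirota3
      simp only [iteratedDeriv_zero]
      rw [show (fun b : ℝ => tauTilde2 ((t,x,y).1 + 0, (t,x,y).2.1 + 0, (t,x,y).2.2 + b) *
            tauTilde2 ((t,x,y).1 - 0, (t,x,y).2.1 - 0, (t,x,y).2.2 - b))
          = P4 ((((x:ℂ) - t)^2 + 3 + (y:ℂ)^2)^2) 0
              (2*(((x:ℂ) - t)^2 + 3 + (y:ℂ)^2) - 4*(y:ℂ)^2) 0 1 from
        funext fun b => by simp only [tauTilde2, P4]; push_cast; ring, P4_it2]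
      ring
    rw [e1, e2, e3]; ring
end
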